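/- Let K be the block-rearrangement operator sending C ∈ ℝ^{(p₁d₁)×(p₂d₂)} to the (p₁p₂)×(d₁d₂) matrix of vectorized blocks. A matrix C admits a representation C = ∑_{r=1}^R A_r ⊗ B_r with A_r ∈ ℝ^{p₁×p₂}, B_r ∈ ℝ^{d₁×d₂} if and only if rank(K(C)) ≤ R. -/

import Mathlib

open Matrix Kronecker

lemma rank_le_iff_exists_factor {m n : Type*} [Fintype m] [Fintype n] [DecidableEq m]
    [DecidableEq n] (M : Matrix m n ℝ) (R : ℕ) :
    M.rank ≤ R ↔ ∃ (U : Matrix m (Fin R) ℝ) (V : Matrix (Fin R) n ℝ), M = U * V := by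
  constructor
  · intro h
    set W := Submodule.span ℝ (Set.range Mᵀ) with hW
    have hd : Module.finrank ℝ W ≤ R := by
      rw [Matrix.rank_eq_finrank_span_cols] at h; exact h
    set d := Module.finrank ℝ W with hdd
    let b := Module.finBasis ℝ W
    have hcol : ∀ j, Mᵀ j ∈ W := fun j => Submodule.subset_span ⟨j, rfl⟩
    refine ⟨Matrix.of fun i r => if hr : (r : ℕ) < d then (b ⟨r, hr⟩ : m → ℝ) i else 0,
      Matrix.of fun r j => if hr : (r : ℕ) < d then b.repr ⟨Mᵀ j, hcol j⟩ ⟨r, hr⟩ else 0, ?_⟩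
    ext i j
    set c : W := ⟨Mᵀ j, hcol j⟩ with hc
    have hMij : M i j = ∑ k : Fin d, b.repr c k * (b k : m → ℝ) i := by
      have := b.sum_repr c
      have := congrArg (fun w : W => (w : m → ℝ) i) this
      simp only [Submodule.coe_sum, Finset.sum_apply, Submodule.coe_smul, Pi.smul_apply, smul_eq_mul, hc] at this
      simpa [Submodule.coe_sum] using this.symm
    rw [hMij]
    rw [Matrix.mul_apply]
    rw [← Finset.sum_subset (Finset.subset_univ
      ((Finset.univ : Finset (Fin d)).map (Fin.castLEEmb hd)))]
    · rw [Finset.sum_map]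
      apply Finset.sum_congr rfl
      intro k _
      simp [Fin.castLEEmb, Fin.castLE, mul_comm, hc]
    · intro r _ hr
      have : ¬ (r : ℕ) < d := by
        intro hlt
        exact hr (Finset.mem_map.2 ⟨⟨r, hlt⟩, Finset.mem_univ _, by ext; simp⟩)
      simp [this]
  · rintro ⟨U, V, rfl⟩
    calc (U * V).rank ≤ U.rank := Matrix.rank_mul_le_left U V
    _ ≤ Fintype.card (Fin R) := Matrix.rank_le_card_width U
    _ = R := Fintype.card_fin R

def K {p₁ p₂ d₁ d₂ : ℕ} (C : Matrix (Fin p₁ × Fin d₁) (Fin p₂ × Fin d₂) ℝ) :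
    Matrix (Fin p₁ × Fin p₂) (Fin d₁ × Fin d₂) ℝ :=
  fun q r => C (q.1, r.1) (q.2, r.2)

/-- `C` admits an `R`-term Kronecker product decomposition iff the
rearranged matrix `K(C)` has rank at most `R`. -/
theorem skpd_representation_iff_rank_le {p₁ p₂ d₁ d₂ R : ℕ}
    (C : Matrix (Fin p₁ × Fin d₁) (Fin p₂ × Fin d₂) ℝ) :
    (∃ (A : Fin R → Matrix (Fin p₁) (Fin p₂) ℝ)
       (B : Fin R → Matrix (Fin d₁) (Fin d₂) ℝ),
        C = ∑ r, A r ⊗ₖ B r) ↔ (K C).rank ≤ R := by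
  rw [rank_le_iff_exists_factor]
  constructor
  · rintro ⟨A, B, rfl⟩
    refine ⟨Matrix.of fun q r => A r q.1 q.2, Matrix.of fun r s => B r s.1 s.2, ?_⟩
    ext ⟨i, j⟩ ⟨k, l⟩
    simp [K, Matrix.mul_apply, Matrix.sum_apply, kroneckerMap_apply]
  · rintro ⟨U, V, hUV⟩
    refine ⟨fun r => Matrix.of fun i j => U (i, j) r, fun r => Matrix.of fun k l => V r (k, l), ?_⟩
    ext ⟨i, k⟩ ⟨j, l⟩
    have : K C (i, j) (k, l) = (U * V) (i, j) (k, l) := by rw [hUV]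
    simpa [K, Matrix.mul_apply, Matrix.sum_apply, kroneckerMap_apply] using this
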